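/- Let α ∈ (1/2,1], κ_2 ∈ ℝ, T > 0. The series of functions Y_n(T) = ∑_{i=1}^n κ_2^{i−1} ∫_0^T ((T−s)^(iα−1)/Γ(iα)) dW_s converges in L^2(Ω) as n → ∞, and the L^2 norm of the i-th summand equals |κ_2|^(i−1) T^(iα−1/2)/((2iα−1)^(1/2) Γ(iα)), which is summable over i. -/

import Mathlib

open MeasureTheory Filter

/-- L² convergence of the Wiener integral series. Here `ξ i` stands for the Wiener integral
`∫_0^T ((T-s)^(iα-1)/Γ(iα)) dW_s`, encoded (via the Itô isometry) by the hypothesis on its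
second moment. The L² norm of the `i`-th summand `κ₂^(i-1) • ξ i` equals
`|κ₂|^(i-1) T^(iα-1/2) / ((2iα-1)^(1/2) Γ(iα))`, this is summable over `i`, and the partial
sums converge in `L²(Ω)`. -/
theorem stmt_6 {Ω : Type*} [MeasurableSpace Ω] (μ : Measure Ω) [IsProbabilityMeasure μ]
    (α κ₂ T : ℝ) (hα : 1 / 2 < α) (hα1 : α ≤ 1) (hT : 0 < T)
    (ξ : ℕ → Lp ℝ 2 μ)
    (hiso : ∀ i : ℕ, 1 ≤ i → ∫ ω, (ξ i ω) ^ 2 ∂μ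
      = T ^ (2 * (i : ℝ) * α - 1) / ((2 * (i : ℝ) * α - 1) * Real.Gamma ((i : ℝ) * α) ^ 2)) :
    (∀ i : ℕ, 1 ≤ i → ‖κ₂ ^ (i - 1) • ξ i‖
        = |κ₂| ^ (i - 1) * T ^ ((i : ℝ) * α - 1 / 2)
            / (Real.sqrt (2 * (i : ℝ) * α - 1) * Real.Gamma ((i : ℝ) * α))) ∧
    (Summable fun i : ℕ => |κ₂| ^ i * T ^ (((i : ℝ) + 1) * α - 1 / 2)
        / (Real.sqrt (2 * ((i : ℝ) + 1) * α - 1) * Real.Gamma (((i : ℝ) + 1) * α))) ∧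
    ∃ Y : Lp ℝ 2 μ,
      Tendsto (fun n => ∑ i ∈ Finset.Icc 1 n, κ₂ ^ (i - 1) • ξ i) atTop (nhds Y) := by
  have hα0 : (0:ℝ) < α := lt_trans (by norm_num) hα
  have hd : ∀ i : ℕ, 1 ≤ i → 0 < 2 * (i : ℝ) * α - 1 := by
    intro i hi
    have h1 : (1:ℝ) ≤ (i:ℝ) := by exact_mod_cast hi
    nlinarith
  have hΓ : ∀ i : ℕ, 1 ≤ i → 0 < Real.Gamma ((i : ℝ) * α) := by
    intro i hi
    have h1 : (1:ℝ) ≤ (i:ℝ) := by exact_mod_cast hi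
    exact Real.Gamma_pos_of_pos (by nlinarith)
  -- Part 1
  have h1 : ∀ i : ℕ, 1 ≤ i → ‖κ₂ ^ (i - 1) • ξ i‖
      = |κ₂| ^ (i - 1) * T ^ ((i : ℝ) * α - 1 / 2)
          / (Real.sqrt (2 * (i : ℝ) * α - 1) * Real.Gamma ((i : ℝ) * α)) := by
    intro i hi
    have hd' := hd i hi
    have hΓ' := hΓ i hi
    have hsq : ‖ξ i‖ ^ 2 = ∫ ω, (ξ i ω) ^ 2 ∂μ := by
      rw [← real_inner_self_eq_norm_sq, MeasureTheory.L2.inner_def]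
      congr 1; ext ω; simp [sq]
    have hnorm : ‖ξ i‖ = T ^ ((i : ℝ) * α - 1 / 2)
        / (Real.sqrt (2 * (i : ℝ) * α - 1) * Real.Gamma ((i : ℝ) * α)) := by
      have h2 : ‖ξ i‖ = Real.sqrt (T ^ (2 * (i : ℝ) * α - 1)
          / ((2 * (i : ℝ) * α - 1) * Real.Gamma ((i : ℝ) * α) ^ 2)) := by
        rw [← hiso i hi, ← hsq, Real.sqrt_sq (norm_nonneg _)]
      rw [h2, Real.sqrt_div (Real.rpow_nonneg hT.le _), Real.sqrt_mul hd'.le,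
        Real.sqrt_sq hΓ'.le, Real.sqrt_eq_rpow, ← Real.rpow_mul hT.le]
      ring_nf
    rw [norm_smul, hnorm, Real.norm_eq_abs, abs_pow]
    ring
  have hsum2 : (Summable fun i : ℕ => |κ₂| ^ i * T ^ (((i : ℝ) + 1) * α - 1 / 2)
      / (Real.sqrt (2 * ((i : ℝ) + 1) * α - 1) * Real.Gamma (((i : ℝ) + 1) * α))) := by
    set f : ℕ → ℝ := fun i => |κ₂| ^ i * T ^ (((i : ℝ) + 1) * α - 1 / 2)
        / (Real.sqrt (2 * ((i : ℝ) + 1) * α - 1) * Real.Gamma (((i : ℝ) + 1) * α)) with hf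
    have hdpos : ∀ i : ℕ, 0 < 2 * ((i : ℝ) + 1) * α - 1 := by
      intro i
      have : (0:ℝ) ≤ (i:ℝ) := Nat.cast_nonneg i
      nlinarith
    have hΓpos : ∀ i : ℕ, 0 < Real.Gamma (((i : ℝ) + 1) * α) := by
      intro i
      have : (0:ℝ) ≤ (i:ℝ) := Nat.cast_nonneg i
      exact Real.Gamma_pos_of_pos (by nlinarith)
    have hfnn : ∀ i, 0 ≤ f i := by
      intro i
      have := hdpos i; have := hΓpos i
      have hs : 0 < Real.sqrt (2 * ((i : ℝ) + 1) * α - 1) := Real.sqrt_pos.mpr (hdpos i)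
      positivity
    set K : ℝ := κ₂ ^ 2 * T ^ (2 * α) with hK
    have hK0 : 0 ≤ K := by positivity
    -- key two-step decay
    have key : ∀ i : ℕ, 1 ≤ ((i:ℝ) + 1) * α → 2 * K ≤ ((i:ℝ) + 1) * α →
        f (i + 2) ≤ (1/2) * f i := by
      intro i hc1 hcK
      set c : ℝ := ((i:ℝ) + 1) * α with hc
      have hc0 : 0 < c := lt_of_lt_of_le one_pos hc1
      have hΓc : 0 < Real.Gamma c := hΓpos i
      have hΓc2 : 0 < Real.Gamma (c + 2 * α) := Real.Gamma_pos_of_pos (by nlinarith)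
      have hg : c * Real.Gamma c ≤ Real.Gamma (c + 2 * α) := by
        have h1 : Real.Gamma (c + 1) = c * Real.Gamma c := Real.Gamma_add_one (ne_of_gt hc0)
        rw [← h1]
        exact Real.Gamma_strictMonoOn_Ici.monotoneOn (by simp [Set.mem_Ici]; linarith)
          (by simp [Set.mem_Ici]; nlinarith) (by nlinarith)
      have hs : Real.sqrt (2 * c - 1) ≤ Real.sqrt (2 * (c + 2 * α) - 1) :=
        Real.sqrt_le_sqrt (by nlinarith)
      have hspos : 0 < Real.sqrt (2 * c - 1) := Real.sqrt_pos.mpr (by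
        have := hdpos i; rw [hc]; nlinarith)
      set A : ℝ := |κ₂| ^ i * T ^ (c - 1/2) with hA
      have hA0 : 0 ≤ A := by positivity
      have e2 : f (i + 2) = (A * K) / (Real.sqrt (2 * (c + 2 * α) - 1)
          * Real.Gamma (c + 2 * α)) := by
        simp only [hf]
        push_cast
        rw [show ((i:ℝ) + 2 + 1) * α - 1/2 = (c - 1/2) + 2 * α by rw [hc]; ring,
          Real.rpow_add hT, show 2 * ((i:ℝ) + 2 + 1) * α - 1 = 2 * (c + 2 * α) - 1 by
            rw [hc]; ring,
          show ((i:ℝ) + 2 + 1) * α = c + 2 * α by rw [hc]; ring,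
          pow_add, sq_abs, hA, hK]
        ring
      have e0 : f i = A / (Real.sqrt (2 * c - 1) * Real.Gamma c) := by
        simp only [hf, hA, hc]
        ring_nf
      rw [e2, e0]
      have step1 : (A * K) / (Real.sqrt (2 * (c + 2 * α) - 1) * Real.Gamma (c + 2 * α))
          ≤ (A * K) / (Real.sqrt (2 * c - 1) * (c * Real.Gamma c)) := by
        apply div_le_div_of_nonneg_left (by positivity) (by positivity)
        calc Real.sqrt (2 * c - 1) * (c * Real.Gamma c)
            ≤ Real.sqrt (2 * (c + 2 * α) - 1) * (c * Real.Gamma c) := by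
              apply mul_le_mul_of_nonneg_right hs (by positivity)
          _ ≤ Real.sqrt (2 * (c + 2 * α) - 1) * Real.Gamma (c + 2 * α) := by
              apply mul_le_mul_of_nonneg_left hg (Real.sqrt_nonneg _)
      refine step1.trans ?_
      rw [show (A * K) / (Real.sqrt (2 * c - 1) * (c * Real.Gamma c))
          = (A / (Real.sqrt (2 * c - 1) * Real.Gamma c)) * (K / c) by
            rw [div_mul_div_comm]; congr 1; ring]
      rw [mul_comm (1/2 : ℝ)]
      apply mul_le_mul_of_nonneg_left _ (by positivity)
      rw [div_le_iff₀ hc0]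
      nlinarith
    -- eventual decay
    have hev : ∀ᶠ i : ℕ in atTop, f (i + 2) ≤ (1/2) * f i := by
      have htend : Tendsto (fun i : ℕ => ((i:ℝ) + 1) * α) atTop atTop := by
        apply Tendsto.atTop_mul_const hα0
        exact tendsto_atTop_add_const_right _ _ tendsto_natCast_atTop_atTop
      filter_upwards [htend.eventually_ge_atTop 1, htend.eventually_ge_atTop (2 * K)]
        with i h1' h2'
      exact key i h1' h2'
    obtain ⟨N, hN⟩ := eventually_atTop.mp hev
    have heven : Summable fun k => f (2 * k) := by
      apply summable_of_ratio_norm_eventually_le (r := 1/2) (by norm_num)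
      rw [eventually_atTop]
      refine ⟨N, fun k hk => ?_⟩
      rw [Real.norm_eq_abs, Real.norm_eq_abs, abs_of_nonneg (hfnn _), abs_of_nonneg (hfnn _)]
      have := hN (2 * k) (by omega)
      calc f (2 * (k + 1)) = f (2 * k + 2) := by ring_nf
        _ ≤ (1/2) * f (2 * k) := this
    have hodd : Summable fun k => f (2 * k + 1) := by
      apply summable_of_ratio_norm_eventually_le (r := 1/2) (by norm_num)
      rw [eventually_atTop]
      refine ⟨N, fun k hk => ?_⟩
      rw [Real.norm_eq_abs, Real.norm_eq_abs, abs_of_nonneg (hfnn _), abs_of_nonneg (hfnn _)]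
      have := hN (2 * k + 1) (by omega)
      calc f (2 * (k + 1) + 1) = f (2 * k + 1 + 2) := by ring_nf
        _ ≤ (1/2) * f (2 * k + 1) := this
    exact heven.even_add_odd hodd
  refine ⟨h1, hsum2, ?_⟩
  · have hnorm' : ∀ j : ℕ, ‖κ₂ ^ j • ξ (j + 1)‖
        = |κ₂| ^ j * T ^ (((j : ℝ) + 1) * α - 1 / 2)
          / (Real.sqrt (2 * ((j : ℝ) + 1) * α - 1) * Real.Gamma (((j : ℝ) + 1) * α)) := by
      intro j
      have h := h1 (j + 1) (Nat.le_add_left 1 j)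
      simp only [Nat.add_sub_cancel, Nat.cast_add, Nat.cast_one] at h
      exact h
    have hsum : Summable fun j : ℕ => κ₂ ^ j • ξ (j + 1) := by
      apply Summable.of_norm
      exact hsum2.congr fun j => (hnorm' j).symm
    obtain ⟨Y, hY⟩ := hsum
    refine ⟨Y, ?_⟩
    have := hY.tendsto_sum_nat
    apply this.congr
    intro n
    rw [← Finset.Ico_add_one_right_eq_Icc, Finset.sum_Ico_eq_sum_range]
    have hnn : n + 1 - 1 = n := rfl
    rw [hnn]
    apply Finset.sum_congr rfl
    intro j _
    rw [Nat.add_comm 1 j, Nat.add_sub_cancel]
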